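/- Let m ≥ 1, let F be a field of characteristic zero, set v = (1+u)^{m+1} u^{−m} ∈ F(u), and let u_0 = u, u_1, …, u_m be the m+1 distinct roots of (1+U)^{m+1} − v U^m in a splitting field over F(u). Then for 0 ≤ j ≤ m−1, the elementary symmetric polynomial of the roots other than u satisfies e_{m−j}(u_1, …, u_m) = (−1)^{m−j−1} Σ_{p=0}^{j} binom(m+1, p) u^{p−j−1}, while e_0(u_1,…,u_m) = 1. In particular every elementary symmetric polynomial of u_1, …, u_m lies in F[u^{−1}], hence so does every symmetric polynomial in u_1, …, u_m. -/

import Mathlib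

open Polynomial Finset


/-- Let `m ≥ 1`, `F` a field of characteristic zero, `v = (1+u)^{m+1} u^{−m} ∈ F(u)`, and let
`u_0 = u, u_1, …, u_m` be the `m+1` distinct roots of `(1+U)^{m+1} − v U^m` in a splitting
field `E` over `F(u)`.  Then for `0 ≤ j ≤ m−1`,
`e_{m−j}(u_1,…,u_m) = (−1)^{m−j−1} ∑_{p=0}^{j} binom(m+1,p) u^{p−j−1}`, while
`e_0(u_1,…,u_m) = 1`.  In particular every symmetric polynomial in `u_1, …, u_m` lies in
`F[u⁻¹]`. -/
theorem esymm_of_other_tamari_roots (F : Type*) [Field F] [CharZero F] (m : ℕ) (hm : 1 ≤ m)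
    (E : Type*) [Field E] (φ : RatFunc F →+* E)
    (u : Fin (m + 1) → E) (hinj : Function.Injective u)
    (h0 : u 0 = φ RatFunc.X)
    (hroot : ∀ i, (1 + u i) ^ (m + 1)
      = φ ((1 + RatFunc.X) ^ (m + 1) / RatFunc.X ^ m) * (u i) ^ m) :
    (∀ j : ℕ, j ≤ m - 1 →
        ∑ s ∈ Finset.powersetCard (m - j) (Finset.univ : Finset (Fin m)),
            ∏ i ∈ s, u i.succ
          = (-1) ^ (m - j - 1)
              * ∑ p ∈ Finset.range (j + 1),
                  (Nat.choose (m + 1) p : E) * (φ RatFunc.X) ^ ((p : ℤ) - j - 1)) ∧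
      (∑ s ∈ Finset.powersetCard 0 (Finset.univ : Finset (Fin m)), ∏ i ∈ s, u i.succ = 1) ∧
      (∀ Q : MvPolynomial (Fin m) F, Q.IsSymmetric →
        ∃ P : Polynomial F,
          Polynomial.eval₂ (φ.comp (algebraMap F (RatFunc F))) (φ RatFunc.X)⁻¹ P
            = MvPolynomial.eval₂ (φ.comp (algebraMap F (RatFunc F))) (fun i => u i.succ) Q) := by
  classical
  set x : E := φ RatFunc.X with hxdef
  have hx : x ≠ 0 := by
    intro h
    exact RatFunc.X_ne_zero (φ.injective (by rw [map_zero]; exact h))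
  set v : E := φ ((1 + RatFunc.X) ^ (m + 1) / RatFunc.X ^ m) with hvdef
  have hv : v * x ^ m = (1 + x) ^ (m + 1) := by
    rw [hvdef, map_div₀, map_pow, map_add, map_one, map_pow, ← hxdef,
      div_mul_cancel₀ _ (pow_ne_zero _ hx)]
  set w : Fin m → E := fun i => u i.succ with hwdef
  set p : E[X] := (X + C 1) ^ (m + 1) - C v * X ^ m with hpdef
  have hdeglt : degree (-(C v * X ^ m)) < degree ((X + C (1:E)) ^ (m + 1)) := by
    rw [degree_neg, degree_pow, degree_X_add_C]
    calc degree (C v * X ^ m) ≤ (m : WithBot ℕ) := degree_C_mul_X_pow_le m v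
    _ < ((m+1 : ℕ) : WithBot ℕ) := by exact_mod_cast Nat.lt_succ_self m
    _ = (m+1) • (1 : WithBot ℕ) := by simp
  have hpmonic : p.Monic := by
    rw [hpdef, sub_eq_add_neg]
    exact ((monic_X_add_C (1:E)).pow (m+1)).add_of_left hdeglt
  have hpdeg : p.natDegree = m + 1 := by
    rw [hpdef, sub_eq_add_neg, natDegree_eq_of_degree_eq_some (n := m+1) (by
      rw [degree_add_eq_left_of_degree_lt hdeglt, degree_pow, degree_X_add_C]
      simp)]
  have hproot : ∀ i, p.IsRoot (u i) := by
    intro i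
    have := hroot i
    simp only [hpdef, IsRoot, eval_sub, eval_mul, eval_pow, eval_add, eval_X, eval_C]
    rw [add_comm (u i) 1, ← hvdef] at *
    rw [← this, sub_self]
  -- factorization
  have hp0 : p ≠ 0 := hpmonic.ne_zero
  set S : Multiset E := Multiset.map u Finset.univ.val with hSdef
  have hSnodup : S.Nodup := Finset.univ.nodup.map hinj
  have hScard : Multiset.card S = m + 1 := by simp [hSdef]
  have hSle : S ≤ p.roots := by
    rw [Multiset.le_iff_count]
    intro r
    by_cases hr : r ∈ S
    · have hmem : r ∈ p.roots := by
        rw [Polynomial.mem_roots hp0]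
        obtain ⟨i, _, rfl⟩ := Multiset.mem_map.1 hr
        exact hproot i
      calc Multiset.count r S ≤ 1 := Multiset.nodup_iff_count_le_one.1 hSnodup r
      _ ≤ Multiset.count r p.roots := Multiset.one_le_count_iff_mem.2 hmem
    · simp [Multiset.count_eq_zero_of_notMem hr]
  have hfac0 : (S.map fun a => X - C a).prod = p := by
    apply eq_of_dvd_of_natDegree_le_of_leadingCoeff
    · exact (Multiset.prod_X_sub_C_dvd_iff_le_roots hp0 S).2 hSle
    · rw [hpdeg, natDegree_multiset_prod_X_sub_C_eq_card, hScard]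
    · rw [hpmonic.leadingCoeff, (monic_multiset_prod_of_monic _ _
        (fun a _ => monic_X_sub_C a)).leadingCoeff]
  set q : E[X] := ∏ i : Fin m, (X - C (w i)) with hqdef
  have hfac : p = (X - C x) * q := by
    rw [← hfac0, hSdef, Multiset.map_map]
    have : (Multiset.map ((fun a => X - C a) ∘ u) Finset.univ.val).prod
        = ∏ i : Fin (m+1), (X - C (u i)) := rfl
    rw [this, Fin.prod_univ_succ, h0, hqdef]
  have hqmonic : q.Monic := monic_prod_of_monic _ _ fun i _ => monic_X_sub_C _
  have hqdeg : q.natDegree = m := by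
    rw [hqdef, natDegree_prod _ _ (fun i _ => (monic_X_sub_C (w i)).ne_zero)]
    simp [natDegree_X_sub_C]
  have hpc : ∀ k, p.coeff (k+1) = q.coeff k - x * q.coeff (k+1) := by
    intro k
    rw [hfac, sub_mul, coeff_sub, coeff_X_mul, coeff_C_mul]
  have hqrec : ∀ t, t ≤ m →
      q.coeff (m - t) = ∑ i ∈ Finset.range (t+1), x^i * p.coeff (m - t + 1 + i) := by
    intro t
    induction t with
    | zero =>
      intro _
      have e1 : q.coeff m = 1 := hqdeg ▸ hqmonic.coeff_natDegree
      have e2 : p.coeff (m+1) = 1 := hpdeg ▸ hpmonic.coeff_natDegree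
      simp [e1, e2]
    | succ t ih =>
      intro ht
      have ht' : t ≤ m := Nat.le_of_succ_le ht
      set k := m - (t+1) with hk
      have hk1 : m - t = k + 1 := by omega
      have h1 : q.coeff k = p.coeff (k+1) + x * q.coeff (k+1) := by
        rw [hpc k]; ring
      have ih' := ih ht'
      rw [hk1] at ih'
      rw [h1, ih', Finset.mul_sum]
      conv_rhs => rw [Finset.sum_range_succ']
      rw [add_comm (p.coeff (k+1))]
      congr 1
      · refine Finset.sum_congr rfl fun i _ => ?_
        rw [← mul_assoc, ← pow_succ', show k+1+1+i = k+1+(i+1) from by omega]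
      · simp
  have hpcoeff : ∀ k, k ≤ m + 1 →
      p.coeff k = ((m+1).choose k : E) - if k = m then v else 0 := by
    intro k hk
    rw [hpdef, coeff_sub, C_1, coeff_X_add_one_pow, coeff_C_mul, coeff_X_pow]
    by_cases h : k = m
    · simp [h]
    · simp [h, Ne.symm h]
  have hpart1 : ∀ j : ℕ, j ≤ m - 1 →
      ∑ s ∈ Finset.powersetCard (m - j) (Finset.univ : Finset (Fin m)), ∏ i ∈ s, w i
        = (-1) ^ (m - j - 1) * ∑ p ∈ Finset.range (j + 1),
            ((m+1).choose p : E) * x ^ ((p : ℤ) - j - 1) := by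
    intro j hj
    have hjm : j + 1 ≤ m := by omega
    set A : E := ∑ p ∈ Finset.range (j + 1), ((m+1).choose p : E) * x ^ p with hAdef
    have hesymm : (∑ s ∈ Finset.powersetCard (m - j) (Finset.univ : Finset (Fin m)),
        ∏ i ∈ s, w i) = (-1)^(m-j) * q.coeff j := by
      have h1 : q = ((Finset.univ.val.map w).map fun a => X - C a).prod := by
        rw [hqdef, Multiset.map_map]; rfl
      have hcard : Multiset.card (Finset.univ.val.map w) = m := by simp
      have h2 := Multiset.prod_X_sub_C_coeff (Finset.univ.val.map w)
        (k := j) (by rw [hcard]; omega)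
      rw [← h1, hcard, Finset.esymm_map_val] at h2
      rw [h2, ← mul_assoc, ← pow_add, Even.neg_one_pow ⟨m-j, by ring⟩, one_mul]
    have h3 := hqrec (m - j) (by omega)
    rw [show m - (m - j) = j from by omega] at h3
    have h4 : q.coeff j = (∑ i ∈ Finset.range (m-j+1),
        x^i * ((m+1).choose (j+1+i) : E)) - x^(m-j-1) * v := by
      rw [h3, Finset.sum_congr rfl (fun i hi => by
        rw [hpcoeff (j+1+i) (by simp only [Finset.mem_range] at hi; omega), mul_sub]),
        Finset.sum_sub_distrib]
      congr 1
      rw [Finset.sum_eq_single (m-j-1)]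
      · rw [if_pos (by omega)]
      · intro i hi hne
        rw [if_neg (by simp only [Finset.mem_range] at hi; omega), mul_zero]
      · intro h
        exact absurd (Finset.mem_range.2 (by omega)) h
    have hB : ∑ p ∈ Finset.range (m+2), ((m+1).choose p : E) * x^p = v * x^m := by
      rw [hv, add_comm (1:E) x, add_pow]
      exact Finset.sum_congr rfl fun k _ => by rw [one_pow, mul_one, mul_comm]
    have hsplit := Finset.sum_Ico_consecutive (fun p => ((m+1).choose p : E) * x^p)
      (Nat.zero_le (j+1)) (show j+1 ≤ m+2 by omega)
    have hIco : ∑ p ∈ Finset.Ico (j+1) (m+2), ((m+1).choose p : E) * x^p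
        = ∑ i ∈ Finset.range (m-j+1), ((m+1).choose (j+1+i) : E) * x^(j+1+i) := by
      rw [Finset.sum_Ico_eq_sum_range, show m+2-(j+1) = m-j+1 from by omega]
    have hkey : x^(j+1) * q.coeff j = -A := by
      rw [h4, mul_sub, Finset.mul_sum,
        Finset.sum_congr rfl (fun i _ => show x^(j+1) * (x^i * ((m+1).choose (j+1+i) : E))
          = ((m+1).choose (j+1+i) : E) * x^(j+1+i) from by
            rw [← mul_assoc, ← pow_add]; ring), ← hIco,
        show x^(j+1) * (x^(m-j-1) * v) = v * x^m from by
          rw [← mul_assoc, ← pow_add, show j+1+(m-j-1) = m from by omega]; ring, ← hB]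
      rw [← Finset.range_eq_Ico, ← Finset.range_eq_Ico] at hsplit
      rw [hAdef, ← hsplit]
      ring
    have hq_j : q.coeff j = -((x^(j+1))⁻¹ * A) := by
      have h5 : (x^(j+1))⁻¹ * (x^(j+1) * q.coeff j) = (x^(j+1))⁻¹ * -A := by rw [hkey]
      rwa [inv_mul_cancel_left₀ (pow_ne_zero _ hx), mul_neg] at h5
    have hRHS : ∑ p ∈ Finset.range (j + 1), ((m+1).choose p : E) * x ^ ((p : ℤ) - j - 1)
        = (x^(j+1))⁻¹ * A := by
      rw [hAdef, Finset.mul_sum]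
      refine Finset.sum_congr rfl fun p _ => ?_
      rw [show (p:ℤ) - (j:ℤ) - 1 = (p:ℤ) - ((j+1:ℕ):ℤ) from by push_cast; ring,
        zpow_sub₀ hx, zpow_natCast, zpow_natCast, div_eq_mul_inv]
      ring
    have hpow : (-1:E)^(m-j) = (-1)^(m-j-1) * (-1) := by
      rw [← pow_succ, show m-j-1+1 = m-j from by omega]
    rw [hesymm, hq_j, hRHS, hpow]
    ring
  have hpart2 : ∑ s ∈ Finset.powersetCard 0 (Finset.univ : Finset (Fin m)),
      ∏ i ∈ s, w i = 1 := by simp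
  letI : Algebra F E := (φ.comp (algebraMap F (RatFunc F))).toAlgebra
  have halg : algebraMap F E = φ.comp (algebraMap F (RatFunc F)) := rfl
  set T : Subalgebra F E := (Polynomial.aeval (x⁻¹) : Polynomial F →ₐ[F] E).range with hTdef
  have hxinvT : x⁻¹ ∈ T := ⟨Polynomial.X, Polynomial.aeval_X _⟩
  have hesymmT : ∀ k : ℕ, k ≤ m →
      (MvPolynomial.aeval w) (MvPolynomial.esymm (Fin m) F k) ∈ T := by
    intro k hk
    rw [MvPolynomial.aeval_esymm_eq_multiset_esymm, Finset.esymm_map_val]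
    by_cases hk0 : k = 0
    · subst hk0
      rw [hpart2]
      exact T.one_mem
    · have hj : m - k ≤ m - 1 := by omega
      have hmk : m - (m - k) = k := by omega
      rw [← hmk, hpart1 (m - k) hj]
      refine T.mul_mem (pow_mem (T.neg_mem T.one_mem) _) (Subalgebra.sum_mem T fun p hp => ?_)
      refine T.mul_mem (T.natCast_mem _) ?_
      have hple : p ≤ (m - k) + 1 := by
        simp only [Finset.mem_range] at hp; omega
      rw [show (p:ℤ) - (m - k : ℕ) - 1 = -(((m - k) + 1 - p : ℕ) : ℤ) from by
          rw [Nat.cast_sub hple]; push_cast; ring,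
        zpow_neg, zpow_natCast, ← inv_pow]
      exact pow_mem hxinvT _
  have hpart3 : ∀ Q : MvPolynomial (Fin m) F, Q.IsSymmetric →
      ∃ P : Polynomial F,
        Polynomial.eval₂ (φ.comp (algebraMap F (RatFunc F))) x⁻¹ P
          = MvPolynomial.eval₂ (φ.comp (algebraMap F (RatFunc F))) w Q := by
    intro Q hQ
    obtain ⟨P', hP'⟩ := MvPolynomial.esymmAlgHom_surjective (σ := Fin m) (R := F) (n := m)
      (by simp) ⟨Q, hQ⟩
    have hQeq : Q = MvPolynomial.aeval
        (fun i : Fin m => MvPolynomial.esymm (Fin m) F (i + 1)) P' := by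
      have h6 := congrArg Subtype.val hP'
      rw [MvPolynomial.esymmAlgHom_apply] at h6
      exact h6.symm
    have hmem : MvPolynomial.aeval w Q ∈ T := by
      rw [hQeq, ← AlgHom.comp_apply, MvPolynomial.comp_aeval]
      set g : Fin m → T := fun i =>
        ⟨MvPolynomial.aeval w (MvPolynomial.esymm (Fin m) F (i + 1)),
          hesymmT (i + 1) i.isLt⟩ with hgdef
      have h7 := Subalgebra.mvPolynomial_aeval_coe T g P'
      have h8 : (fun i : Fin m => (MvPolynomial.aeval w)
          (MvPolynomial.esymm (Fin m) F (i + 1))) = fun i => (g i : E) := rfl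
      rw [h8, h7]
      exact (MvPolynomial.aeval g P' : T).2
    obtain ⟨P, hP⟩ := (AlgHom.mem_range _).mp hmem
    refine ⟨P, ?_⟩
    rw [Polynomial.aeval_def, halg] at hP
    have h9 : MvPolynomial.aeval w Q
        = MvPolynomial.eval₂ (φ.comp (algebraMap F (RatFunc F))) w Q := by
      rw [MvPolynomial.aeval_def, halg]
    exact hP.trans h9
  exact ⟨hpart1, hpart2, hpart3⟩
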